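/- For every n ≥ 0, as r → 0⁺ one has Φ_n″(r) − 1/r² − ln(1/r) [ I₀(γr) v̄_n(r) − (I₁(γr)/r) w̄_n(r) ] − ω_n = O(r²), where ω_n = (ln(2/γ) − C)(γ²/2 − γ a_{n,1} + 2 a_{n,2}) − γ²/4 + γ a_{n,1} − 3 a_{n,2} + 2 a_{n,3}/γ (with a_{n,k} = 0 for k > n), and v̄_n, w̄_n are the polynomials v̄_n(r) = 2 Σ_{k=1}^{⌊n/2⌋} k(2k−1) a_{n,2k} r^{2k−2} − γ Σ_{k=0}^{⌊(n−1)/2⌋} (2k+1) a_{n,2k+1} r^{2k} − γ w̃_n(r) and w̄_n(r) = 4 Σ_{k=1}^{⌊(n−1)/2⌋} k² a_{n,2k+1} r^{2k} − 2γ Σ_{k=1}^{⌊n/2⌋} k a_{n,2k} r^{2k} − γ r ṽ_n(r) − w̃_n(r), with ṽ_n(r) = 2 Σ_{k=1}^{⌊n/2⌋} k a_{n,2k} r^{2k−1} − γ w_n(r) and w̃_n(r) = 2 Σ_{k=1}^{⌊(n−1)/2⌋} k a_{n,2k+1} r^{2k} − γ v_n(r). -/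

import Mathlib

open Real Filter

/-- `I₀(z) = Σ_{n=0}^∞ (z/2)^{2n}/(n!)²`. -/
noncomputable def besselI0 (z : ℝ) : ℝ :=
  ∑' n : ℕ, (z / 2) ^ (2 * n) / (Nat.factorial n : ℝ) ^ 2

/-- `I₁(z) = Σ_{n=0}^∞ (z/2)^{2n+1}/(n!(n+1)!)`. -/
noncomputable def besselI1 (z : ℝ) : ℝ :=
  ∑' n : ℕ, (z / 2) ^ (2 * n + 1) / ((Nat.factorial n : ℝ) * (Nat.factorial (n + 1) : ℝ))

/-- `ψ(0) = 0`, `ψ(n) = Σ_{m=1}^n 1/m`. -/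
noncomputable def psiHarm (n : ℕ) : ℝ := ∑ m ∈ Finset.Icc 1 n, (1 / m : ℝ)

/-- `K₀(z) = −(ln(z/2) + C) I₀(z) + Σ_{n=1}^∞ (ψ(n)/(n!)²) (z/2)^{2n}`. -/
noncomputable def besselK0 (z : ℝ) : ℝ :=
  -(Real.log (z / 2) + Real.eulerMascheroniConstant) * besselI0 z +
    ∑' n : ℕ, psiHarm (n + 1) / (Nat.factorial (n + 1) : ℝ) ^ 2 * (z / 2) ^ (2 * (n + 1))

/-- `K₁(z) = 1/z + (ln(z/2) + C) I₁(z) − (1/2) Σ_{n=0}^∞ ((ψ(n+1)+ψ(n))/(n!(n+1)!)) (z/2)^{2n+1}`. -/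
noncomputable def besselK1 (z : ℝ) : ℝ :=
  1 / z + (Real.log (z / 2) + Real.eulerMascheroniConstant) * besselI1 z -
    (1 / 2) * ∑' n : ℕ, (psiHarm (n + 1) + psiHarm n) /
      ((Nat.factorial n : ℝ) * (Nat.factorial (n + 1) : ℝ)) * (z / 2) ^ (2 * n + 1)

/-- `β_n = κ²(n+1)/c²`. -/
noncomputable def betaC (κ c : ℝ) (n : ℕ) : ℝ := κ ^ 2 * (n + 1) / c ^ 2

/-- `γ = κ/c`. -/
noncomputable def gammaC (κ c : ℝ) : ℝ := κ / c

/-- `v_n(r) = Σ_{k=0}^{⌊n/2⌋} a_{n,2k} r^{2k}`. -/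
noncomputable def vPoly (a : ℕ → ℕ → ℝ) (n : ℕ) (r : ℝ) : ℝ :=
  ∑ k ∈ Finset.range (n / 2 + 1), a n (2 * k) * r ^ (2 * k)

/-- `w_n(r) = Σ_{k=0}^{⌊(n−1)/2⌋} a_{n,2k+1} r^{2k+1}` (so `w₀ = 0` since `a_{0,1} = 0`). -/
noncomputable def wPoly (a : ℕ → ℕ → ℝ) (n : ℕ) (r : ℝ) : ℝ :=
  ∑ k ∈ Finset.range ((n - 1) / 2 + 1), a n (2 * k + 1) * r ^ (2 * k + 1)

/-- `Φ_n(r) = K₀(γr) v_n(r) + K₁(γr) w_n(r)`. -/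
noncomputable def PhiFund (γ : ℝ) (a : ℕ → ℕ → ℝ) (n : ℕ) (r : ℝ) : ℝ :=
  besselK0 (γ * r) * vPoly a n r + besselK1 (γ * r) * wPoly a n r

/-- `ṽ_n(r) = 2 Σ_{k=1}^{⌊n/2⌋} k a_{n,2k} r^{2k−1} − γ w_n(r)`. -/
noncomputable def vTilde (γ : ℝ) (a : ℕ → ℕ → ℝ) (n : ℕ) (r : ℝ) : ℝ :=
  2 * ∑ k ∈ Finset.Icc 1 (n / 2), (k : ℝ) * a n (2 * k) * r ^ (2 * k - 1) - γ * wPoly a n r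

/-- `w̃_n(r) = 2 Σ_{k=1}^{⌊(n−1)/2⌋} k a_{n,2k+1} r^{2k} − γ v_n(r)`. -/
noncomputable def wTilde (γ : ℝ) (a : ℕ → ℕ → ℝ) (n : ℕ) (r : ℝ) : ℝ :=
  2 * ∑ k ∈ Finset.Icc 1 ((n - 1) / 2), (k : ℝ) * a n (2 * k + 1) * r ^ (2 * k) -
    γ * vPoly a n r

/-- `v̄_n(r) = 2 Σ_{k=1}^{⌊n/2⌋} k(2k−1) a_{n,2k} r^{2k−2}
  − γ Σ_{k=0}^{⌊(n−1)/2⌋} (2k+1) a_{n,2k+1} r^{2k} − γ w̃_n(r)`. -/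
noncomputable def vBar (γ : ℝ) (a : ℕ → ℕ → ℝ) (n : ℕ) (r : ℝ) : ℝ :=
  2 * ∑ k ∈ Finset.Icc 1 (n / 2), (k : ℝ) * (2 * k - 1 : ℝ) * a n (2 * k) * r ^ (2 * k - 2) -
    γ * ∑ k ∈ Finset.range ((n - 1) / 2 + 1), (2 * k + 1 : ℝ) * a n (2 * k + 1) * r ^ (2 * k) -
    γ * wTilde γ a n r

/-- `w̄_n(r) = 4 Σ_{k=1}^{⌊(n−1)/2⌋} k² a_{n,2k+1} r^{2k}
  − 2γ Σ_{k=1}^{⌊n/2⌋} k a_{n,2k} r^{2k} − γ r ṽ_n(r) − w̃_n(r)`. -/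
noncomputable def wBar (γ : ℝ) (a : ℕ → ℕ → ℝ) (n : ℕ) (r : ℝ) : ℝ :=
  4 * ∑ k ∈ Finset.Icc 1 ((n - 1) / 2), (k : ℝ) ^ 2 * a n (2 * k + 1) * r ^ (2 * k) -
    2 * γ * ∑ k ∈ Finset.Icc 1 (n / 2), (k : ℝ) * a n (2 * k) * r ^ (2 * k) -
    γ * r * vTilde γ a n r - wTilde γ a n r

namespace Stmt17

open Topology


/-- Power series sum. -/
noncomputable def T (q : ℕ → ℝ) (x : ℝ) : ℝ := ∑' n : ℕ, q n * x ^ n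

/-- Coefficientwise derivative. -/
noncomputable def Dc (q : ℕ → ℝ) : ℕ → ℝ := fun n => ((n : ℝ) + 1) * q (n + 1)

/-- Majorized coefficients: entire function class. -/
def Maj (q : ℕ → ℝ) : Prop :=
  ∃ C B : ℝ, 0 ≤ B ∧ ∀ n, |q n| ≤ C * B ^ n / (n.factorial : ℝ)

theorem Maj.C_nonneg {q : ℕ → ℝ} {C B : ℝ} (h : ∀ n, |q n| ≤ C * B ^ n / (n.factorial : ℝ)) :
    0 ≤ C := by
  have h0 := h 0
  simp only [pow_zero, mul_one, Nat.factorial_zero, Nat.cast_one, div_one] at h0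
  exact le_trans (abs_nonneg _) h0

theorem Maj.summable {q : ℕ → ℝ} (h : Maj q) (x : ℝ) :
    Summable fun n => q n * x ^ n := by
  obtain ⟨C, B, hB, hq⟩ := h
  have hC : 0 ≤ C := Maj.C_nonneg hq
  have hs : Summable (fun n : ℕ => C * ((B * |x|) ^ n / (n.factorial : ℝ))) :=
    (Real.summable_pow_div_factorial (B * |x|)).mul_left C
  apply Summable.of_norm_bounded hs
  intro n
  have h1 : ‖q n * x ^ n‖ = |q n| * |x| ^ n := by
    rw [norm_mul, norm_pow]; rfl
  rw [h1]
  have h2 : |q n| * |x| ^ n ≤ (C * B ^ n / (n.factorial : ℝ)) * |x| ^ n := by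
    gcongr
    exact hq n
  refine h2.trans (le_of_eq ?_)
  rw [mul_pow]
  field_simp

theorem Maj.tail {q : ℕ → ℝ} (h : Maj q) : Maj (fun n => q (n + 1)) := by
  obtain ⟨C, B, hB, hq⟩ := h
  have hC : 0 ≤ C := Maj.C_nonneg hq
  refine ⟨C * B, B, hB, fun n => ?_⟩
  have key : C * B ^ (n + 1) / (((n + 1).factorial : ℕ) : ℝ) ≤ C * B ^ (n + 1) / (n.factorial : ℝ) := by
    apply div_le_div_of_nonneg_left (by positivity) (by positivity)
    exact_mod_cast Nat.factorial_le (Nat.le_succ n)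
  refine (hq (n + 1)).trans (key.trans (le_of_eq ?_))
  ring

theorem Maj.mulNat {q : ℕ → ℝ} (h : Maj q) : Maj (fun n => (n : ℝ) * q n) := by
  obtain ⟨C, B, hB, hq⟩ := h
  have hC : 0 ≤ C := Maj.C_nonneg hq
  refine ⟨C, 2 * B, by positivity, fun n => ?_⟩
  have hn : (n : ℝ) ≤ 2 ^ n := by
    exact_mod_cast (Nat.lt_two_pow_self (n := n)).le
  calc |(n : ℝ) * q n| = (n : ℝ) * |q n| := by
        rw [abs_mul, Nat.abs_cast]
    _ ≤ (2 : ℝ) ^ n * (C * B ^ n / (n.factorial : ℝ)) := by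
        apply mul_le_mul hn (hq n) (abs_nonneg _) (by positivity)
    _ = C * (2 * B) ^ n / (n.factorial : ℝ) := by
        rw [mul_pow]; ring

theorem Maj.dcMaj {q : ℕ → ℝ} (h : Maj q) : Maj (Stmt17.Dc q) := by
  obtain ⟨C, B, hB, hq⟩ := h.mulNat.tail
  refine ⟨C, B, hB, fun n => ?_⟩
  have := hq n
  simpa [Stmt17.Dc, add_comm] using this

theorem T_zero (q : ℕ → ℝ) : T q 0 = q 0 := by
  unfold T
  rw [tsum_eq_single 0]
  · simp
  · intro n hn
    simp [zero_pow hn]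

/-- Splitting off the first term. -/
theorem T_shift {q : ℕ → ℝ} (h : Maj q) (x : ℝ) :
    T q x = q 0 + x * T (fun m => q (m + 1)) x := by
  unfold T
  rw [Summable.tsum_eq_zero_add (h.summable x)]
  congr 1
  · simp
  · rw [← tsum_mul_left]
    apply tsum_congr
    intro n
    ring

theorem T_mulNat {q : ℕ → ℝ} (h : Maj q) (x : ℝ) :
    x * T (Stmt17.Dc q) x = T (fun m => (m : ℝ) * q m) x := by
  rw [T_shift h.mulNat x]
  simp only [Nat.cast_zero, zero_mul, zero_add]
  congr 1
  apply tsum_congr fun n => ?_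
  simp only [Stmt17.Dc]
  push_cast
  ring

theorem T_const_mul (q : ℕ → ℝ) (c x : ℝ) :
    c * T q x = T (fun m => c * q m) x := by
  unfold T
  rw [← tsum_mul_left]
  exact tsum_congr fun n => by ring

/-- Differentiation of entire power series. -/
theorem Maj.hasDerivAt {q : ℕ → ℝ} (hq : Maj q) (x : ℝ) :
    HasDerivAt (T q) (T (Stmt17.Dc q) x) x := by
  obtain ⟨C, B, hB, hqb⟩ := hq
  have hC : 0 ≤ C := Maj.C_nonneg hqb
  set M : ℝ := |x| + 1 with hM
  have hM1 : (1 : ℝ) ≤ M := by simp [hM]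
  have hM0 : (0 : ℝ) ≤ M := by linarith
  have hxM : x ∈ Metric.ball (0 : ℝ) M := by
    simp [Metric.mem_ball, Real.dist_eq, hM]
  set u : ℕ → ℝ := fun n => C * ((2 * (B * M)) ^ n / (n.factorial : ℝ)) with hu
  have hus : Summable u :=
    (Real.summable_pow_div_factorial (2 * (B * M))).mul_left C
  have hbound : ∀ (n : ℕ) (y : ℝ), y ∈ Metric.ball (0 : ℝ) M →
      ‖q n * ((n : ℝ) * y ^ (n - 1))‖ ≤ u n := by
    intro n y hy
    have hyM : |y| ≤ M := by
      simp [Metric.mem_ball, Real.dist_eq] at hy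
      exact hy.le
    have h1 : ‖q n * ((n : ℝ) * y ^ (n - 1))‖ = |q n| * ((n : ℝ) * |y| ^ (n - 1)) := by
      simp [Real.norm_eq_abs, abs_mul, abs_pow, Nat.abs_cast]
    rw [h1]
    have h2 : |y| ^ (n - 1) ≤ M ^ n := by
      calc |y| ^ (n - 1) ≤ M ^ (n - 1) := by
            apply pow_le_pow_left₀ (abs_nonneg _) hyM
        _ ≤ M ^ n := pow_le_pow_right₀ hM1 (Nat.sub_le n 1)
    have hn2 : (n : ℝ) ≤ 2 ^ n := by exact_mod_cast (Nat.lt_two_pow_self (n := n)).le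
    calc |q n| * ((n : ℝ) * |y| ^ (n - 1))
        ≤ (C * B ^ n / (n.factorial : ℝ)) * (2 ^ n * M ^ n) := by
          apply mul_le_mul (hqb n) ?_ (by positivity) (by positivity)
          apply mul_le_mul hn2 h2 (by positivity) (by positivity)
      _ = u n := by
          rw [hu]
          simp only []
          rw [mul_pow, mul_pow]
          field_simp
  have hds : Summable fun n => q n * ((n : ℝ) * x ^ (n - 1)) := by
    apply Summable.of_norm_bounded hus
    intro n; exact hbound n x hxM
  have hsum0 : Summable fun n => q n * (0 : ℝ) ^ n := Maj.summable ⟨C, B, hB, hqb⟩ 0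
  have key : HasDerivAt (fun z : ℝ => ∑' n : ℕ, q n * z ^ n)
      (∑' n : ℕ, q n * ((n : ℝ) * x ^ (n - 1))) x :=
    hasDerivAt_tsum_of_isPreconnected hus Metric.isOpen_ball
      (convex_ball (0 : ℝ) M).isPreconnected
      (fun n y _ => (hasDerivAt_pow n y).const_mul (q n))
      hbound (Metric.mem_ball_self (by linarith)) hsum0 hxM
  refine key.congr_deriv ?_
  rw [Summable.tsum_eq_zero_add hds]
  simp only [Nat.cast_zero, zero_mul, mul_zero, zero_add, pow_zero]
  unfold T Dc
  apply tsum_congr fun n => ?_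
  push_cast
  ring


-- coefficient sequences and identities (to append inside namespace)
noncomputable def aA : ℕ → ℝ := fun n => 1 / (n.factorial : ℝ) ^ 2
noncomputable def aB : ℕ → ℝ := fun n => 1 / ((n.factorial : ℝ) * ((n + 1).factorial : ℝ))
noncomputable def cC : ℕ → ℝ := fun n => psiHarm n / (n.factorial : ℝ) ^ 2
noncomputable def cD : ℕ → ℝ :=
  fun n => (psiHarm (n + 1) + psiHarm n) / ((n.factorial : ℝ) * ((n + 1).factorial : ℝ))

theorem psiHarm_zero : psiHarm 0 = 0 := by simp [psiHarm]

theorem psiHarm_one : psiHarm 1 = 1 := by simp [psiHarm]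

theorem psiHarm_nonneg (n : ℕ) : 0 ≤ psiHarm n := by
  apply Finset.sum_nonneg
  intro m _
  positivity

theorem psiHarm_le (n : ℕ) : psiHarm n ≤ n := by
  calc psiHarm n ≤ ∑ m ∈ Finset.Icc 1 n, (1 : ℝ) := by
        apply Finset.sum_le_sum
        intro m hm
        simp only [Finset.mem_Icc] at hm
        have hm1 : (1 : ℝ) ≤ (m : ℝ) := by exact_mod_cast hm.1
        rw [div_le_one (by linarith)]
        exact hm1
    _ = n := by simp [Nat.card_Icc]

theorem fact_pos (n : ℕ) : (0 : ℝ) < (n.factorial : ℝ) := by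
  exact_mod_cast Nat.factorial_pos n

theorem one_le_fact (n : ℕ) : (1 : ℝ) ≤ (n.factorial : ℝ) := by
  exact_mod_cast Nat.one_le_iff_ne_zero.2 (Nat.factorial_ne_zero n)

theorem majA : Maj aA := by
  refine ⟨1, 1, zero_le_one, fun n => ?_⟩
  simp only [aA]
  rw [abs_of_nonneg (by positivity)]
  simp only [one_pow, one_mul]
  rw [div_le_div_iff₀ (by positivity) (fact_pos n)]
  have := one_le_fact n
  nlinarith

theorem majB : Maj aB := by
  refine ⟨1, 1, zero_le_one, fun n => ?_⟩
  simp only [aB]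
  rw [abs_of_nonneg (by positivity)]
  simp only [one_pow, one_mul]
  rw [div_le_div_iff₀ (by positivity) (fact_pos n)]
  have h1 := one_le_fact (n + 1)
  have h2 := fact_pos n
  nlinarith

theorem majC : Maj cC := by
  refine ⟨1, 2, by norm_num, fun n => ?_⟩
  simp only [cC]
  rw [abs_of_nonneg (div_nonneg (psiHarm_nonneg n) (by positivity))]
  simp only [one_mul]
  have h1 : psiHarm n ≤ (2 : ℝ) ^ n := by
    refine (psiHarm_le n).trans ?_
    exact_mod_cast (Nat.lt_two_pow_self (n := n)).le
  rw [div_le_div_iff₀ (by positivity) (fact_pos n)]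
  have h2 := one_le_fact n
  have h3 := psiHarm_nonneg n
  have k1 : psiHarm n * (n.factorial : ℝ) ≤ 2 ^ n * (n.factorial : ℝ) :=
    mul_le_mul_of_nonneg_right h1 (fact_pos n).le
  have k2 : (2 : ℝ) ^ n * (n.factorial : ℝ) ≤ 2 ^ n * (n.factorial : ℝ) ^ 2 := by
    have hp : (0:ℝ) ≤ 2 ^ n := by positivity
    nlinarith [mul_nonneg hp (mul_nonneg (fact_pos n).le (sub_nonneg.2 h2))]
  nlinarith

theorem majD : Maj cD := by
  refine ⟨2, 2, by norm_num, fun n => ?_⟩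
  simp only [cD]
  rw [abs_of_nonneg (div_nonneg (add_nonneg (psiHarm_nonneg _) (psiHarm_nonneg _)) (by positivity))]
  have h1 : psiHarm (n + 1) + psiHarm n ≤ 2 * (2 : ℝ) ^ n := by
    have a1 := psiHarm_le (n + 1)
    have a2 := psiHarm_le n
    have : ((n : ℝ) + 1) ≤ (2 : ℝ) ^ n := by
      exact_mod_cast Nat.succ_le_of_lt (Nat.lt_two_pow_self (n := n))
    push_cast at a1
    nlinarith
  rw [div_le_div_iff₀ (by positivity) (fact_pos n)]
  have h2 := one_le_fact n
  have h3 := one_le_fact (n + 1)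
  have h4 := fact_pos n
  have h5 := fact_pos (n + 1)
  have h6 : 0 ≤ psiHarm (n + 1) + psiHarm n := add_nonneg (psiHarm_nonneg _) (psiHarm_nonneg _)
  have k1 : (psiHarm (n + 1) + psiHarm n) * (n.factorial : ℝ) ≤ 2 * 2 ^ n * (n.factorial : ℝ) :=
    mul_le_mul_of_nonneg_right h1 (fact_pos n).le
  have k2 : 2 * (2 : ℝ) ^ n * (n.factorial : ℝ) ≤
      2 * 2 ^ n * ((n.factorial : ℝ) * ((n + 1).factorial : ℝ)) := by
    have hp : (0:ℝ) ≤ 2 ^ n := by positivity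
    nlinarith [mul_nonneg hp (mul_nonneg h4.le (sub_nonneg.2 h3))]
  nlinarith

theorem fact_ne (n : ℕ) : ((n.factorial : ℝ)) ≠ 0 := (fact_pos n).ne'

theorem E1 : T (Dc aA) = T aB := by
  funext x
  exact tsum_congr fun n => by
    have h : Dc aA n = aB n := by
      simp only [Dc, aA, aB, Nat.factorial_succ]
      push_cast
      field_simp
    rw [h]

theorem E4 (x : ℝ) : T aA x = T aB x + x * T (Dc aB) x := by
  rw [T_mulNat majB x]
  unfold T
  rw [← Summable.tsum_add (majB.summable x) (majB.mulNat.summable x)]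
  exact tsum_congr fun n => by
    have h : aA n = aB n + (n : ℝ) * aB n := by
      simp only [aA, aB, Nat.factorial_succ]
      push_cast
      field_simp
      ring
    rw [h]; ring

theorem E5 (x : ℝ) : T aB x = 2 * T (Dc aB) x + x * T (Dc (Dc aB)) x := by
  rw [T_mulNat majB.dcMaj x, T_const_mul]
  unfold T
  rw [← Summable.tsum_add ((majB.dcMaj.summable x).mul_left 2 |>.congr fun n => by ring)
      (majB.dcMaj.mulNat.summable x)]
  exact tsum_congr fun n => by
    have h : aB n = 2 * Dc aB n + (n : ℝ) * Dc aB n := by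
      simp only [Dc, aB, Nat.factorial_succ]
      push_cast
      field_simp
      ring
    rw [h]; ring

theorem bI0 (z : ℝ) : besselI0 z = T aA ((z / 2) ^ 2) := by
  exact tsum_congr fun n => by
    rw [← pow_mul]
    simp only [aA]
    ring

theorem bI1 (z : ℝ) : besselI1 z = (z / 2) * T aB ((z / 2) ^ 2) := by
  unfold besselI1 T
  rw [← tsum_mul_left]
  exact tsum_congr fun n => by
    rw [pow_succ, ← pow_mul]
    simp only [aB]
    ring

theorem SK0 (z : ℝ) :
    ∑' n : ℕ, psiHarm (n + 1) / (Nat.factorial (n + 1) : ℝ) ^ 2 * (z / 2) ^ (2 * (n + 1))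
      = T cC ((z / 2) ^ 2) := by
  unfold T
  rw [Summable.tsum_eq_zero_add (majC.summable _)]
  have h0 : cC 0 * ((z / 2) ^ 2) ^ 0 = 0 := by simp [cC, psiHarm_zero]
  rw [h0, zero_add]
  exact tsum_congr fun n => by
    rw [← pow_mul]
    simp only [cC]
    try ring

theorem SK1 (z : ℝ) :
    ∑' n : ℕ, (psiHarm (n + 1) + psiHarm n) /
        ((Nat.factorial n : ℝ) * (Nat.factorial (n + 1) : ℝ)) * (z / 2) ^ (2 * n + 1)
      = (z / 2) * T cD ((z / 2) ^ 2) := by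
  unfold T
  rw [← tsum_mul_left]
  exact tsum_congr fun n => by
    rw [pow_succ, ← pow_mul]
    simp only [cD]
    ring

theorem bK0 (z : ℝ) :
    besselK0 z = -(Real.log (z / 2) + Real.eulerMascheroniConstant) * T aA ((z / 2) ^ 2)
      + T cC ((z / 2) ^ 2) := by
  unfold besselK0
  rw [bI0, SK0]

theorem bK1 (z : ℝ) :
    besselK1 z = 1 / z
      + (Real.log (z / 2) + Real.eulerMascheroniConstant) * ((z / 2) * T aB ((z / 2) ^ 2))
      - (1 / 2) * ((z / 2) * T cD ((z / 2) ^ 2)) := by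
  unfold besselK1
  rw [bI1, SK1]

noncomputable def polyN (n : ℕ) (p : ℕ → ℝ) (x : ℝ) : ℝ :=
  ∑ k ∈ Finset.range (n + 3), p k * x ^ k

noncomputable def shiftUp (p : ℕ → ℝ) : ℕ → ℝ
  | 0 => 0
  | k + 1 => p k

theorem polyN_zero (n : ℕ) (p : ℕ → ℝ) : polyN n p 0 = p 0 := by
  unfold polyN
  rw [Finset.sum_eq_single 0]
  · simp
  · intro b _ hb
    simp [zero_pow hb]
  · intro h
    exact absurd (Finset.mem_range.2 (by omega)) h

theorem polyN_hasDerivAt {n : ℕ} {p : ℕ → ℝ} (htop : p (n + 3) = 0) (x : ℝ) :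
    HasDerivAt (polyN n p) (polyN n (Dc p) x) x := by
  have h : HasDerivAt (polyN n p)
      (∑ k ∈ Finset.range (n + 3), p k * ((k : ℝ) * x ^ (k - 1))) x := by
    unfold polyN
    apply HasDerivAt.fun_sum
    intro k _
    exact (hasDerivAt_pow k x).const_mul (p k)
  convert h using 1
  rw [Finset.sum_range_succ' (fun k => p k * ((k : ℝ) * x ^ (k - 1))) (n + 2)]
  simp only [Nat.cast_zero, zero_mul, mul_zero, add_zero]
  unfold polyN
  rw [Finset.sum_range_succ]
  have h2 : Dc p (n + 2) * x ^ (n + 2) = 0 := by simp [Dc, htop]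
  rw [h2, add_zero]
  apply Finset.sum_congr rfl
  intro k _
  simp only [Dc, Nat.add_sub_cancel]
  push_cast
  ring

theorem polyN_shift {n : ℕ} {p : ℕ → ℝ} (htop : p (n + 2) = 0) (x : ℝ) :
    x * polyN n p x = polyN n (shiftUp p) x := by
  unfold polyN
  rw [Finset.mul_sum, Finset.sum_range_succ,
    Finset.sum_range_succ' (fun k => shiftUp p k * x ^ k) (n + 2)]
  rw [htop]
  simp only [shiftUp, mul_zero, zero_mul, add_zero, pow_zero]
  apply Finset.sum_congr rfl
  intro k _
  ring

theorem polyN_tail {n : ℕ} {p : ℕ → ℝ} (htop : p (n + 3) = 0) (x : ℝ) :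
    polyN n p x = p 0 + x * polyN n (fun k => p (k + 1)) x := by
  have htail : (fun k => p (k + 1)) (n + 2) = 0 := htop
  rw [polyN_shift (n := n) (p := fun k => p (k + 1)) htail x]
  unfold polyN
  rw [Finset.sum_range_succ' (fun k => p k * x ^ k) (n + 2),
    Finset.sum_range_succ' (fun k => shiftUp (fun j => p (j + 1)) k * x ^ k) (n + 2)]
  simp only [shiftUp, pow_zero, mul_one, zero_mul, add_zero]
  ring

theorem sum_extend {M N : ℕ} (h : M ≤ N) (f : ℕ → ℝ) (hf : ∀ k, M ≤ k → f k = 0) :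
    ∑ k ∈ Finset.range M, f k = ∑ k ∈ Finset.range N, f k :=
  Finset.sum_subset (Finset.range_subset_range.2 h)
    (fun x _ hx => hf x (le_of_not_gt fun hlt => hx (Finset.mem_range.2 hlt)))

theorem sum_Icc_shift {K : ℕ} (f : ℕ → ℝ) :
    ∑ k ∈ Finset.Icc 1 K, f k = ∑ i ∈ Finset.range K, f (1 + i) := by
  rw [← Finset.Ico_add_one_right_eq_Icc, Finset.sum_Ico_eq_sum_range]
  simp

theorem sum_Icc_one {K : ℕ} (f : ℕ → ℝ) (h0 : f 0 = 0) :
    ∑ k ∈ Finset.Icc 1 K, f k = ∑ k ∈ Finset.range (K + 1), f k := by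
  have hr : Finset.range (K + 1) = Finset.Icc 0 K := by
    ext a
    simp only [Finset.mem_range, Finset.mem_Icc]
    omega
  have he : Finset.Icc 1 K = (Finset.Icc 0 K).erase 0 := by
    ext a
    simp only [Finset.mem_Icc, Finset.mem_erase]
    omega
  rw [hr, he, Finset.sum_erase _ h0]

noncomputable def pv (a : ℕ → ℕ → ℝ) (n : ℕ) : ℕ → ℝ := fun k => a n (2 * k)
noncomputable def pw (a : ℕ → ℕ → ℝ) (n : ℕ) : ℕ → ℝ := fun k => a n (2 * k + 1)
noncomputable def ptv (γ : ℝ) (a : ℕ → ℕ → ℝ) (n : ℕ) : ℕ → ℝ :=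
  fun k => 2 * ((k : ℝ) + 1) * pv a n (k + 1) - γ * pw a n k
noncomputable def ptw (γ : ℝ) (a : ℕ → ℕ → ℝ) (n : ℕ) : ℕ → ℝ :=
  fun k => 2 * (k : ℝ) * pw a n k - γ * pv a n k
noncomputable def pvb (γ : ℝ) (a : ℕ → ℕ → ℝ) (n : ℕ) : ℕ → ℝ :=
  fun k => 2 * ((k : ℝ) + 1) * (2 * (k : ℝ) + 1) * pv a n (k + 1)
    - γ * (2 * (k : ℝ) + 1) * pw a n k - γ * ptw γ a n k
noncomputable def pwb (γ : ℝ) (a : ℕ → ℕ → ℝ) (n : ℕ) : ℕ → ℝ :=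
  fun k => 4 * (k : ℝ) ^ 2 * pw a n k - 2 * γ * (k : ℝ) * pv a n k
    - γ * shiftUp (ptv γ a n) k - ptw γ a n k

section Conv

variable {a : ℕ → ℕ → ℝ} {n : ℕ}

theorem vPoly_eq (hz : ∀ k, n < k → a n k = 0) (r : ℝ) : vPoly a n r = polyN n (pv a n) (r ^ 2) := by
  unfold vPoly polyN
  rw [Finset.sum_congr rfl (fun (k : ℕ) _ => show a n (2 * k) * r ^ (2 * k) = pv a n k * (r ^ 2) ^ k by
    rw [← pow_mul]; rfl)]
  exact sum_extend (by omega) _ (fun k hk => by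
    have : a n (2 * k) = 0 := hz _ (by omega)
    simp [pv, this])

theorem wPoly_eq (hz : ∀ k, n < k → a n k = 0) (r : ℝ) : wPoly a n r = r * polyN n (pw a n) (r ^ 2) := by
  unfold wPoly polyN
  rw [Finset.mul_sum]
  rw [Finset.sum_congr rfl (fun (k : ℕ) _ =>
    show a n (2 * k + 1) * r ^ (2 * k + 1) = r * (pw a n k * (r ^ 2) ^ k) by
      rw [pow_succ, ← pow_mul, pw]; ring)]
  exact sum_extend (by omega) _ (fun k hk => by
    have : a n (2 * k + 1) = 0 := hz _ (by omega)
    simp [pw, this])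

theorem vTilde_eq (γ : ℝ) (hz : ∀ k, n < k → a n k = 0) (r : ℝ) : vTilde γ a n r = r * polyN n (ptv γ a n) (r ^ 2) := by
  unfold vTilde
  rw [wPoly_eq hz r]
  rw [sum_Icc_shift]
  rw [Finset.sum_congr rfl (fun (i : ℕ) _ =>
    show ((1 + i : ℕ) : ℝ) * a n (2 * (1 + i)) * r ^ (2 * (1 + i) - 1)
        = r * (((i : ℝ) + 1) * pv a n (i + 1) * (r ^ 2) ^ i) by
      rw [show 2 * (1 + i) - 1 = 2 * i + 1 from by omega,
        show 2 * (1 + i) = 2 * (i + 1) from by omega, pow_succ, ← pow_mul, pv]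
      push_cast
      ring)]
  rw [sum_extend (show n / 2 ≤ n + 3 by omega) _ (fun k hk => by
    have : pv a n (k + 1) = 0 := hz _ (by omega)
    simp [this])]
  unfold polyN
  simp only [Finset.mul_sum, ← Finset.sum_sub_distrib]
  apply Finset.sum_congr rfl
  intro k _
  simp only [ptv]
  ring

theorem wTilde_eq (γ : ℝ) (hz : ∀ k, n < k → a n k = 0) (r : ℝ) : wTilde γ a n r = polyN n (ptw γ a n) (r ^ 2) := by
  unfold wTilde
  rw [vPoly_eq hz r]
  rw [sum_Icc_one (fun k => (k : ℝ) * a n (2 * k + 1) * r ^ (2 * k)) (by norm_num)]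
  rw [Finset.sum_congr rfl (fun (k : ℕ) _ =>
    show (k : ℝ) * a n (2 * k + 1) * r ^ (2 * k) = (k : ℝ) * pw a n k * (r ^ 2) ^ k by
      rw [← pow_mul, pw])]
  rw [sum_extend (show (n - 1) / 2 + 1 ≤ n + 3 by omega) _ (fun k hk => by
    have : pw a n k = 0 := by
      show a n (2 * k + 1) = 0
      exact hz _ (by omega)
    simp [this])]
  unfold polyN
  simp only [Finset.mul_sum, ← Finset.sum_sub_distrib]
  apply Finset.sum_congr rfl
  intro k _
  simp only [ptw]
  ring

theorem vBar_eq (γ : ℝ) (hz : ∀ k, n < k → a n k = 0) (r : ℝ) : vBar γ a n r = polyN n (pvb γ a n) (r ^ 2) := by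
  unfold vBar
  rw [wTilde_eq γ hz r]
  rw [sum_Icc_shift]
  rw [Finset.sum_congr rfl (fun (i : ℕ) _ =>
    show ((1 + i : ℕ) : ℝ) * (2 * ((1 + i : ℕ) : ℝ) - 1) * a n (2 * (1 + i)) * r ^ (2 * (1 + i) - 2)
        = ((i : ℝ) + 1) * (2 * (i : ℝ) + 1) * pv a n (i + 1) * (r ^ 2) ^ i by
      rw [show 2 * (1 + i) - 2 = 2 * i from by omega,
        show 2 * (1 + i) = 2 * (i + 1) from by omega, ← pow_mul, pv]
      push_cast
      ring)]
  rw [sum_extend (show n / 2 ≤ n + 3 by omega) _ (fun k hk => by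
    have : pv a n (k + 1) = 0 := hz _ (by omega)
    simp [this])]
  rw [Finset.sum_congr rfl (fun (k : ℕ) _ =>
    show (2 * (k : ℝ) + 1) * a n (2 * k + 1) * r ^ (2 * k)
        = (2 * (k : ℝ) + 1) * pw a n k * (r ^ 2) ^ k by
      rw [← pow_mul, pw])]
  rw [sum_extend (show (n - 1) / 2 + 1 ≤ n + 3 by omega) _ (fun k hk => by
    have : pw a n k = 0 := hz _ (by omega)
    simp [this])]
  unfold polyN
  simp only [Finset.mul_sum, ← Finset.sum_sub_distrib]
  apply Finset.sum_congr rfl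
  intro k _
  simp only [pvb, ptw]
  ring

theorem wBar_eq (γ : ℝ) (hz : ∀ k, n < k → a n k = 0) (r : ℝ) : wBar γ a n r = polyN n (pwb γ a n) (r ^ 2) := by
  unfold wBar
  rw [wTilde_eq γ hz r, vTilde_eq γ hz r]
  have hptv : ptv γ a n (n + 2) = 0 := by
    have h1 : pv a n (n + 2 + 1) = 0 := hz _ (by omega)
    have h2 : pw a n (n + 2) = 0 := hz _ (by omega)
    simp [ptv, h1, h2]
  have hsh : γ * r * (r * polyN n (ptv γ a n) (r ^ 2)) = γ * polyN n (shiftUp (ptv γ a n)) (r ^ 2) := by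
    rw [← polyN_shift hptv (r ^ 2)]
    ring
  rw [hsh]
  rw [sum_Icc_one (fun k => (k : ℝ) ^ 2 * a n (2 * k + 1) * r ^ (2 * k)) (by norm_num)]
  rw [Finset.sum_congr rfl (fun (k : ℕ) _ =>
    show (k : ℝ) ^ 2 * a n (2 * k + 1) * r ^ (2 * k) = (k : ℝ) ^ 2 * pw a n k * (r ^ 2) ^ k by
      rw [← pow_mul, pw])]
  rw [sum_extend (show (n - 1) / 2 + 1 ≤ n + 3 by omega) (fun k => (k : ℝ) ^ 2 * pw a n k * (r ^ 2) ^ k) (fun k hk => by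
    have : pw a n k = 0 := hz _ (by omega)
    simp [this])]
  rw [sum_Icc_one (fun k => (k : ℝ) * a n (2 * k) * r ^ (2 * k)) (by norm_num)]
  rw [Finset.sum_congr rfl (fun (k : ℕ) _ =>
    show (k : ℝ) * a n (2 * k) * r ^ (2 * k) = (k : ℝ) * pv a n k * (r ^ 2) ^ k by
      rw [← pow_mul, pv])]
  rw [sum_extend (show n / 2 + 1 ≤ n + 3 by omega) (fun k => (k : ℝ) * pv a n k * (r ^ 2) ^ k) (fun k hk => by
    have : pv a n k = 0 := hz _ (by omega)
    simp [this])]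
  unfold polyN
  simp only [Finset.mul_sum, ← Finset.sum_sub_distrib]
  apply Finset.sum_congr rfl
  intro k _
  simp only [pwb, ptw]
  ring

end Conv

theorem hasDerivAt_Tcomp {q : ℕ → ℝ} (hq : Maj q) (u x : ℝ) :
    HasDerivAt (fun y => T q (u * y)) (u * T (Dc q) (u * x)) x := by
  have h1 : HasDerivAt (fun y : ℝ => u * y) u x := by
    simpa using (hasDerivAt_id x).const_mul u
  have h2 := (hq.hasDerivAt (u * x)).comp x h1
  exact h2.congr_deriv (mul_comm _ _)

noncomputable def PXf (γ : ℝ) (a : ℕ → ℕ → ℝ) (n : ℕ) (x : ℝ) : ℝ :=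
  -T aA (γ ^ 2 / 4 * x) * polyN n (pv a n) x
    + γ / 2 * x * T aB (γ ^ 2 / 4 * x) * polyN n (pw a n) x

noncomputable def DPXf (γ : ℝ) (a : ℕ → ℕ → ℝ) (n : ℕ) (x : ℝ) : ℝ :=
  -(γ ^ 2 / 4) * T aB (γ ^ 2 / 4 * x) * polyN n (pv a n) x
    - T aA (γ ^ 2 / 4 * x) * polyN n (Dc (pv a n)) x
    + γ / 2 * (T aB (γ ^ 2 / 4 * x) * polyN n (pw a n) x
      + x * (γ ^ 2 / 4) * T (Dc aB) (γ ^ 2 / 4 * x) * polyN n (pw a n) x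
      + x * T aB (γ ^ 2 / 4 * x) * polyN n (Dc (pw a n)) x)

noncomputable def DDPXf (γ : ℝ) (a : ℕ → ℕ → ℝ) (n : ℕ) (x : ℝ) : ℝ :=
  -(γ ^ 2 / 4) ^ 2 * T (Dc aB) (γ ^ 2 / 4 * x) * polyN n (pv a n) x
    - 2 * (γ ^ 2 / 4) * T aB (γ ^ 2 / 4 * x) * polyN n (Dc (pv a n)) x
    - T aA (γ ^ 2 / 4 * x) * polyN n (Dc (Dc (pv a n))) x
    + γ / 2 * (2 * (γ ^ 2 / 4) * T (Dc aB) (γ ^ 2 / 4 * x) * polyN n (pw a n) x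
      + 2 * T aB (γ ^ 2 / 4 * x) * polyN n (Dc (pw a n)) x
      + (γ ^ 2 / 4) ^ 2 * x * T (Dc (Dc aB)) (γ ^ 2 / 4 * x) * polyN n (pw a n) x
      + 2 * (γ ^ 2 / 4) * x * T (Dc aB) (γ ^ 2 / 4 * x) * polyN n (Dc (pw a n)) x
      + x * T aB (γ ^ 2 / 4 * x) * polyN n (Dc (Dc (pw a n))) x)

noncomputable def RXf (γ : ℝ) (a : ℕ → ℕ → ℝ) (n : ℕ) (x : ℝ) : ℝ :=
  T cC (γ ^ 2 / 4 * x) * polyN n (pv a n) x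
    - γ / 4 * x * T cD (γ ^ 2 / 4 * x) * polyN n (pw a n) x
    + 1 / γ * polyN n (pw a n) x

noncomputable def DRXf (γ : ℝ) (a : ℕ → ℕ → ℝ) (n : ℕ) (x : ℝ) : ℝ :=
  γ ^ 2 / 4 * T (Dc cC) (γ ^ 2 / 4 * x) * polyN n (pv a n) x
    + T cC (γ ^ 2 / 4 * x) * polyN n (Dc (pv a n)) x
    - γ / 4 * (T cD (γ ^ 2 / 4 * x) * polyN n (pw a n) x
      + x * (γ ^ 2 / 4) * T (Dc cD) (γ ^ 2 / 4 * x) * polyN n (pw a n) x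
      + x * T cD (γ ^ 2 / 4 * x) * polyN n (Dc (pw a n)) x)
    + 1 / γ * polyN n (Dc (pw a n)) x

noncomputable def DDRXf (γ : ℝ) (a : ℕ → ℕ → ℝ) (n : ℕ) (x : ℝ) : ℝ :=
  (γ ^ 2 / 4) ^ 2 * T (Dc (Dc cC)) (γ ^ 2 / 4 * x) * polyN n (pv a n) x
    + 2 * (γ ^ 2 / 4) * T (Dc cC) (γ ^ 2 / 4 * x) * polyN n (Dc (pv a n)) x
    + T cC (γ ^ 2 / 4 * x) * polyN n (Dc (Dc (pv a n))) x
    - γ / 4 * (2 * (γ ^ 2 / 4) * T (Dc cD) (γ ^ 2 / 4 * x) * polyN n (pw a n) x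
      + 2 * T cD (γ ^ 2 / 4 * x) * polyN n (Dc (pw a n)) x
      + (γ ^ 2 / 4) ^ 2 * x * T (Dc (Dc cD)) (γ ^ 2 / 4 * x) * polyN n (pw a n) x
      + 2 * (γ ^ 2 / 4) * x * T (Dc cD) (γ ^ 2 / 4 * x) * polyN n (Dc (pw a n)) x
      + x * T cD (γ ^ 2 / 4 * x) * polyN n (Dc (Dc (pw a n))) x)
    + 1 / γ * polyN n (Dc (Dc (pw a n))) x

noncomputable def QXf (γ : ℝ) (a : ℕ → ℕ → ℝ) (n : ℕ) (x : ℝ) : ℝ :=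
  -(γ ^ 2 / 4) * T (fun m => aA (m + 1)) (γ ^ 2 / 4 * x) * polyN n (pv a n) x
    - polyN n (fun k => pv a n (k + 1)) x
    + γ / 2 * T aB (γ ^ 2 / 4 * x) * polyN n (pw a n) x

noncomputable def ThetaF (c1 γ : ℝ) (a : ℕ → ℕ → ℝ) (n : ℕ) (x : ℝ) : ℝ :=
  -QXf γ a n x + 4 * DPXf γ a n x
    + c1 * (2 * DPXf γ a n x + 4 * x * DDPXf γ a n x)
    + 2 * DRXf γ a n x + 4 * x * DDRXf γ a n x

section DerivLemmas

variable {a : ℕ → ℕ → ℝ} {n : ℕ} (γ : ℝ)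

theorem hpv_top (hz : ∀ k, n < k → a n k = 0) : ∀ k, n + 1 ≤ k → pv a n k = 0 :=
  fun k hk => hz _ (by omega)
theorem hpw_top (hz : ∀ k, n < k → a n k = 0) : ∀ k, n + 1 ≤ k → pw a n k = 0 :=
  fun k hk => hz _ (by omega)

theorem PXf_hasDerivAt (hz : ∀ k, n < k → a n k = 0) (x : ℝ) :
    HasDerivAt (PXf γ a n) (DPXf γ a n x) x := by
  have hA := hasDerivAt_Tcomp majA (γ ^ 2 / 4) x
  rw [E1] at hA
  have hB := hasDerivAt_Tcomp majB (γ ^ 2 / 4) x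
  have hV := polyN_hasDerivAt (hpv_top hz (n + 3) (by omega)) x
  have hW := polyN_hasDerivAt (hpw_top hz (n + 3) (by omega)) x
  have hid : HasDerivAt (fun y : ℝ => γ / 2 * y) (γ / 2) x := by
    simpa using (hasDerivAt_id x).const_mul (γ / 2)
  have H := (hA.neg.mul hV).add (((hid.mul hB).mul hW))
  show HasDerivAt (fun y => -T aA (γ ^ 2 / 4 * y) * polyN n (pv a n) y
    + γ / 2 * y * T aB (γ ^ 2 / 4 * y) * polyN n (pw a n) y) (DPXf γ a n x) x
  refine H.congr_deriv ?_
  simp only [Pi.neg_apply, Pi.mul_apply, Pi.add_apply, Pi.sub_apply, Function.comp_apply]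
  unfold DPXf
  ring

theorem DPXf_hasDerivAt (hz : ∀ k, n < k → a n k = 0) (x : ℝ) :
    HasDerivAt (DPXf γ a n) (DDPXf γ a n x) x := by
  have hA := hasDerivAt_Tcomp majA (γ ^ 2 / 4) x
  rw [E1] at hA
  have hB := hasDerivAt_Tcomp majB (γ ^ 2 / 4) x
  have hB2 := hasDerivAt_Tcomp majB.dcMaj (γ ^ 2 / 4) x
  have hV := polyN_hasDerivAt (hpv_top hz (n + 3) (by omega)) x
  have hv4 : pv a n (n + 3 + 1) = 0 := hpv_top hz _ (by omega)
  have hV1 := polyN_hasDerivAt (n := n) (p := Dc (pv a n)) (by simp [Dc, hv4]) x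
  have hW := polyN_hasDerivAt (hpw_top hz (n + 3) (by omega)) x
  have hw4 : pw a n (n + 3 + 1) = 0 := hpw_top hz _ (by omega)
  have hW1 := polyN_hasDerivAt (n := n) (p := Dc (pw a n)) (by simp [Dc, hw4]) x
  have hid : HasDerivAt (fun y : ℝ => y) 1 x := hasDerivAt_id x
  have H := (((hB.const_mul (-(γ ^ 2 / 4))).mul hV).sub (hA.mul hV1)).add
    ((((hB.mul hW).add ((((hid.mul_const (γ ^ 2 / 4)).mul hB2).mul hW))).add
      (((hid.mul hB).mul hW1))).const_mul (γ / 2))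
  show HasDerivAt (fun y => -(γ ^ 2 / 4) * T aB (γ ^ 2 / 4 * y) * polyN n (pv a n) y
    - T aA (γ ^ 2 / 4 * y) * polyN n (Dc (pv a n)) y
    + γ / 2 * (T aB (γ ^ 2 / 4 * y) * polyN n (pw a n) y
      + y * (γ ^ 2 / 4) * T (Dc aB) (γ ^ 2 / 4 * y) * polyN n (pw a n) y
      + y * T aB (γ ^ 2 / 4 * y) * polyN n (Dc (pw a n)) y)) (DDPXf γ a n x) x
  refine H.congr_deriv ?_
  simp only [Pi.neg_apply, Pi.mul_apply, Pi.add_apply, Pi.sub_apply, Function.comp_apply]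
  unfold DDPXf
  ring

end DerivLemmas

section DerivLemmas2

variable {a : ℕ → ℕ → ℝ} {n : ℕ} (γ : ℝ)

theorem RXf_hasDerivAt (hz : ∀ k, n < k → a n k = 0) (x : ℝ) :
    HasDerivAt (RXf γ a n) (DRXf γ a n x) x := by
  have hC := hasDerivAt_Tcomp majC (γ ^ 2 / 4) x
  have hD := hasDerivAt_Tcomp majD (γ ^ 2 / 4) x
  have hV := polyN_hasDerivAt (hpv_top hz (n + 3) (by omega)) x
  have hW := polyN_hasDerivAt (hpw_top hz (n + 3) (by omega)) x
  have hid4 : HasDerivAt (fun y : ℝ => γ / 4 * y) (γ / 4) x := by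
    simpa using (hasDerivAt_id x).const_mul (γ / 4)
  have H := ((hC.mul hV).sub (((hid4.mul hD).mul hW))).add (hW.const_mul (1 / γ))
  show HasDerivAt (fun y => T cC (γ ^ 2 / 4 * y) * polyN n (pv a n) y
    - γ / 4 * y * T cD (γ ^ 2 / 4 * y) * polyN n (pw a n) y
    + 1 / γ * polyN n (pw a n) y) (DRXf γ a n x) x
  refine H.congr_deriv ?_
  simp only [Pi.neg_apply, Pi.mul_apply, Pi.add_apply, Pi.sub_apply, Function.comp_apply]
  unfold DRXf
  ring

theorem DRXf_hasDerivAt (hz : ∀ k, n < k → a n k = 0) (x : ℝ) :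
    HasDerivAt (DRXf γ a n) (DDRXf γ a n x) x := by
  have hC := hasDerivAt_Tcomp majC (γ ^ 2 / 4) x
  have hC2 := hasDerivAt_Tcomp majC.dcMaj (γ ^ 2 / 4) x
  have hD := hasDerivAt_Tcomp majD (γ ^ 2 / 4) x
  have hD2 := hasDerivAt_Tcomp majD.dcMaj (γ ^ 2 / 4) x
  have hV := polyN_hasDerivAt (hpv_top hz (n + 3) (by omega)) x
  have hv4 : pv a n (n + 3 + 1) = 0 := hpv_top hz _ (by omega)
  have hV1 := polyN_hasDerivAt (n := n) (p := Dc (pv a n)) (by simp [Dc, hv4]) x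
  have hW := polyN_hasDerivAt (hpw_top hz (n + 3) (by omega)) x
  have hw4 : pw a n (n + 3 + 1) = 0 := hpw_top hz _ (by omega)
  have hW1 := polyN_hasDerivAt (n := n) (p := Dc (pw a n)) (by simp [Dc, hw4]) x
  have hid : HasDerivAt (fun y : ℝ => y) 1 x := hasDerivAt_id x
  have H := ((((hC2.const_mul (γ ^ 2 / 4)).mul hV).add (hC.mul hV1)).sub
    ((((hD.mul hW).add ((((hid.mul_const (γ ^ 2 / 4)).mul hD2).mul hW))).add
      (((hid.mul hD).mul hW1))).const_mul (γ / 4))).add (hW1.const_mul (1 / γ))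
  show HasDerivAt (fun y => γ ^ 2 / 4 * T (Dc cC) (γ ^ 2 / 4 * y) * polyN n (pv a n) y
    + T cC (γ ^ 2 / 4 * y) * polyN n (Dc (pv a n)) y
    - γ / 4 * (T cD (γ ^ 2 / 4 * y) * polyN n (pw a n) y
      + y * (γ ^ 2 / 4) * T (Dc cD) (γ ^ 2 / 4 * y) * polyN n (pw a n) y
      + y * T cD (γ ^ 2 / 4 * y) * polyN n (Dc (pw a n)) y)
    + 1 / γ * polyN n (Dc (pw a n)) y) (DDRXf γ a n x) x
  refine H.congr_deriv ?_
  simp only [Pi.neg_apply, Pi.mul_apply, Pi.add_apply, Pi.sub_apply, Function.comp_apply]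
  unfold DDRXf
  ring

theorem QXf_diff (hz : ∀ k, n < k → a n k = 0) (x : ℝ) :
    DifferentiableAt ℝ (QXf γ a n) x := by
  have hAt := hasDerivAt_Tcomp majA.tail (γ ^ 2 / 4) x
  have hB := hasDerivAt_Tcomp majB (γ ^ 2 / 4) x
  have hV := polyN_hasDerivAt (hpv_top hz (n + 3) (by omega)) x
  have hW := polyN_hasDerivAt (hpw_top hz (n + 3) (by omega)) x
  have hVt := polyN_hasDerivAt (n := n) (p := fun k => pv a n (k + 1))
    (hpv_top hz (n + 3 + 1) (by omega)) x
  exact ((((hAt.const_mul (-(γ ^ 2 / 4))).mul hV).sub hVt).add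
    (((hB.const_mul (γ / 2)).mul hW))).differentiableAt

theorem DDPXf_diff (hz : ∀ k, n < k → a n k = 0) (x : ℝ) :
    DifferentiableAt ℝ (DDPXf γ a n) x := by
  have hA := hasDerivAt_Tcomp majA (γ ^ 2 / 4) x
  have hB := hasDerivAt_Tcomp majB (γ ^ 2 / 4) x
  have hB2 := hasDerivAt_Tcomp majB.dcMaj (γ ^ 2 / 4) x
  have hB3 := hasDerivAt_Tcomp majB.dcMaj.dcMaj (γ ^ 2 / 4) x
  have hV := polyN_hasDerivAt (hpv_top hz (n + 3) (by omega)) x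
  have hv4 : pv a n (n + 3 + 1) = 0 := hpv_top hz _ (by omega)
  have hv5 : pv a n (n + 3 + 1 + 1) = 0 := hpv_top hz _ (by omega)
  have hV1 := polyN_hasDerivAt (n := n) (p := Dc (pv a n)) (by simp [Dc, hv4]) x
  have hV2 := polyN_hasDerivAt (n := n) (p := Dc (Dc (pv a n))) (by simp [Dc, hv5]) x
  have hW := polyN_hasDerivAt (hpw_top hz (n + 3) (by omega)) x
  have hw4 : pw a n (n + 3 + 1) = 0 := hpw_top hz _ (by omega)
  have hw5 : pw a n (n + 3 + 1 + 1) = 0 := hpw_top hz _ (by omega)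
  have hW1 := polyN_hasDerivAt (n := n) (p := Dc (pw a n)) (by simp [Dc, hw4]) x
  have hW2 := polyN_hasDerivAt (n := n) (p := Dc (Dc (pw a n))) (by simp [Dc, hw5]) x
  have hid : HasDerivAt (fun y : ℝ => y) 1 x := hasDerivAt_id x
  have T1 := (hB2.const_mul (-(γ ^ 2 / 4) ^ 2)).mul hV
  have T2 := (hB.const_mul (2 * (γ ^ 2 / 4))).mul hV1
  have T3 := hA.mul hV2
  have S1 := (hB2.const_mul (2 * (γ ^ 2 / 4))).mul hW
  have S2 := (hB.const_mul 2).mul hW1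
  have S3 := ((hid.const_mul ((γ ^ 2 / 4) ^ 2)).mul hB3).mul hW
  have S4 := ((hid.const_mul (2 * (γ ^ 2 / 4))).mul hB2).mul hW1
  have S5 := (hid.mul hB).mul hW2
  have H := ((T1.sub T2).sub T3).add
    (((((S1.add S2).add S3).add S4).add S5).const_mul (γ / 2))
  exact H.differentiableAt

theorem DDRXf_diff (hz : ∀ k, n < k → a n k = 0) (x : ℝ) :
    DifferentiableAt ℝ (DDRXf γ a n) x := by
  have hC := hasDerivAt_Tcomp majC (γ ^ 2 / 4) x
  have hC2 := hasDerivAt_Tcomp majC.dcMaj (γ ^ 2 / 4) x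
  have hC3 := hasDerivAt_Tcomp majC.dcMaj.dcMaj (γ ^ 2 / 4) x
  have hD := hasDerivAt_Tcomp majD (γ ^ 2 / 4) x
  have hD2 := hasDerivAt_Tcomp majD.dcMaj (γ ^ 2 / 4) x
  have hD3 := hasDerivAt_Tcomp majD.dcMaj.dcMaj (γ ^ 2 / 4) x
  have hV := polyN_hasDerivAt (hpv_top hz (n + 3) (by omega)) x
  have hv4 : pv a n (n + 3 + 1) = 0 := hpv_top hz _ (by omega)
  have hv5 : pv a n (n + 3 + 1 + 1) = 0 := hpv_top hz _ (by omega)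
  have hV1 := polyN_hasDerivAt (n := n) (p := Dc (pv a n)) (by simp [Dc, hv4]) x
  have hV2 := polyN_hasDerivAt (n := n) (p := Dc (Dc (pv a n))) (by simp [Dc, hv5]) x
  have hW := polyN_hasDerivAt (hpw_top hz (n + 3) (by omega)) x
  have hw4 : pw a n (n + 3 + 1) = 0 := hpw_top hz _ (by omega)
  have hw5 : pw a n (n + 3 + 1 + 1) = 0 := hpw_top hz _ (by omega)
  have hW1 := polyN_hasDerivAt (n := n) (p := Dc (pw a n)) (by simp [Dc, hw4]) x
  have hW2 := polyN_hasDerivAt (n := n) (p := Dc (Dc (pw a n))) (by simp [Dc, hw5]) x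
  have hid : HasDerivAt (fun y : ℝ => y) 1 x := hasDerivAt_id x
  have T1 := (hC3.const_mul ((γ ^ 2 / 4) ^ 2)).mul hV
  have T2 := (hC2.const_mul (2 * (γ ^ 2 / 4))).mul hV1
  have T3 := hC.mul hV2
  have S1 := (hD2.const_mul (2 * (γ ^ 2 / 4))).mul hW
  have S2 := (hD.const_mul 2).mul hW1
  have S3 := ((hid.const_mul ((γ ^ 2 / 4) ^ 2)).mul hD3).mul hW
  have S4 := ((hid.const_mul (2 * (γ ^ 2 / 4))).mul hD2).mul hW1
  have S5 := (hid.mul hD).mul hW2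
  have H := (((T1.add T2).add T3).sub
    (((((S1.add S2).add S3).add S4).add S5).const_mul (γ / 4))).add
    (hW2.const_mul (1 / γ))
  exact H.differentiableAt

theorem PXQ (ha0 : a n 0 = 1) (hz : ∀ k, n < k → a n k = 0) (x : ℝ) :
    PXf γ a n x + 1 = x * QXf γ a n x := by
  have hAt : T aA (γ ^ 2 / 4 * x)
      = 1 + γ ^ 2 / 4 * x * T (fun m => aA (m + 1)) (γ ^ 2 / 4 * x) := by
    rw [T_shift majA (γ ^ 2 / 4 * x)]
    norm_num [aA]
  have hVt : polyN n (pv a n) x = 1 + x * polyN n (fun k => pv a n (k + 1)) x := by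
    rw [polyN_tail (p := pv a n) (hpv_top hz (n + 3) (by omega)) x,
      show pv a n 0 = 1 from ha0]
  unfold PXf QXf
  rw [hAt, hVt]
  ring

theorem R4 (x : ℝ) :
    polyN n (pvb γ a n) x = 2 * polyN n (Dc (pv a n)) x
      + 4 * polyN n (shiftUp (Dc (Dc (pv a n)))) x
      + γ ^ 2 * polyN n (pv a n) x - γ * polyN n (pw a n) x
      - 4 * γ * polyN n (shiftUp (Dc (pw a n))) x := by
  unfold polyN
  simp only [Finset.mul_sum, ← Finset.sum_sub_distrib, ← Finset.sum_add_distrib]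
  apply Finset.sum_congr rfl
  intro k _
  rcases k with _ | k
  · simp only [pvb, ptw, Dc, shiftUp]
    push_cast
    ring
  · simp only [pvb, ptw, Dc, shiftUp]
    push_cast
    ring

theorem R5 (x : ℝ) :
    polyN n (pwb γ a n) x = 2 * polyN n (shiftUp (Dc (pw a n))) x
      + 4 * polyN n (shiftUp (shiftUp (Dc (Dc (pw a n))))) x
      - 4 * γ * polyN n (shiftUp (Dc (pv a n))) x
      + γ ^ 2 * polyN n (shiftUp (pw a n)) x + γ * polyN n (pv a n) x := by
  unfold polyN
  simp only [Finset.mul_sum, ← Finset.sum_sub_distrib, ← Finset.sum_add_distrib]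
  apply Finset.sum_congr rfl
  intro k _
  rcases k with _ | _ | k
  · simp only [pwb, ptv, ptw, Dc, shiftUp]
    push_cast
    ring
  · simp only [pwb, ptv, ptw, Dc, shiftUp]
    push_cast
    ring
  · simp only [pwb, ptv, ptw, Dc, shiftUp]
    push_cast
    ring

theorem XY (hz : ∀ k, n < k → a n k = 0) {x : ℝ} (hx : x ≠ 0) :
    2 * DPXf γ a n x + 4 * x * DDPXf γ a n x
      + (T aA (γ ^ 2 / 4 * x) * polyN n (pvb γ a n) x
        - γ / 2 * T aB (γ ^ 2 / 4 * x) * polyN n (pwb γ a n) x) = 0 := by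
  have hv3 : pv a n (n + 2 + 1) = 0 := hpv_top hz _ (by omega)
  have hv4 : pv a n (n + 2 + 1 + 1) = 0 := hpv_top hz _ (by omega)
  have hw2 : pw a n (n + 2) = 0 := hpw_top hz _ (by omega)
  have hw3 : pw a n (n + 2 + 1) = 0 := hpw_top hz _ (by omega)
  have hw4 : pw a n (n + 2 + 1 + 1) = 0 := hpw_top hz _ (by omega)
  have s1 : polyN n (shiftUp (Dc (Dc (pv a n)))) x = x * polyN n (Dc (Dc (pv a n))) x :=
    (polyN_shift (by simp [Dc, hv4]) x).symm
  have s2 : polyN n (shiftUp (Dc (pw a n))) x = x * polyN n (Dc (pw a n)) x :=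
    (polyN_shift (by simp [Dc, hw3]) x).symm
  have s3 : polyN n (shiftUp (Dc (pv a n))) x = x * polyN n (Dc (pv a n)) x :=
    (polyN_shift (by simp [Dc, hv3]) x).symm
  have s4 : polyN n (shiftUp (shiftUp (Dc (Dc (pw a n))))) x
      = x * (x * polyN n (Dc (Dc (pw a n))) x) := by
    rw [polyN_shift (n := n) (p := Dc (Dc (pw a n))) (by simp [Dc, hw4]) x,
      polyN_shift (n := n) (p := shiftUp (Dc (Dc (pw a n))))
        (by simp [shiftUp, Dc, hw3]) x]
  have s5 : polyN n (shiftUp (pw a n)) x = x * polyN n (pw a n) x :=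
    (polyN_shift (by simp [hw2]) x).symm
  have r4 := R4 (a := a) (n := n) γ x
  rw [s1, s2] at r4
  have r5 := R5 (a := a) (n := n) γ x
  rw [s2, s3, s4, s5] at r5
  have e4 := E4 (γ ^ 2 / 4 * x)
  have e5 := E5 (γ ^ 2 / 4 * x)
  unfold DPXf DDPXf
  rw [r4, r5, e4]
  linear_combination (-2 * γ * (γ ^ 2 / 4) * x * polyN n (pw a n) x) * e5

end DerivLemmas2

noncomputable def F1f (c1 γ : ℝ) (a : ℕ → ℕ → ℝ) (n : ℕ) (r : ℝ) : ℝ :=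
  PXf γ a n (r ^ 2) / r + (Real.log r + c1) * (2 * r * DPXf γ a n (r ^ 2))
    + 2 * r * DRXf γ a n (r ^ 2)

noncomputable def Phi2f (c1 γ : ℝ) (a : ℕ → ℕ → ℝ) (n : ℕ) (r : ℝ) : ℝ :=
  -(PXf γ a n (r ^ 2) / r ^ 2) + 4 * DPXf γ a n (r ^ 2)
    + (Real.log r + c1) * (2 * DPXf γ a n (r ^ 2) + 4 * r ^ 2 * DDPXf γ a n (r ^ 2))
    + 2 * DRXf γ a n (r ^ 2) + 4 * r ^ 2 * DDRXf γ a n (r ^ 2)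

section Final

variable {a : ℕ → ℕ → ℝ} {n : ℕ} (γ c1 : ℝ)

theorem G_hasDeriv (hz : ∀ k, n < k → a n k = 0) {r : ℝ} (hr : 0 < r) :
    HasDerivAt (fun s => (Real.log s + c1) * PXf γ a n (s ^ 2) + RXf γ a n (s ^ 2))
      (F1f c1 γ a n r) r := by
  have hsq : HasDerivAt (fun s : ℝ => s ^ 2) (2 * r) r := by
    simpa using hasDerivAt_pow 2 r
  have hP := (PXf_hasDerivAt γ hz (r ^ 2)).comp r hsq
  have hR := (RXf_hasDerivAt γ hz (r ^ 2)).comp r hsq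
  have hlog : HasDerivAt (fun s : ℝ => Real.log s + c1) r⁻¹ r :=
    (Real.hasDerivAt_log hr.ne').add_const c1
  have H := (hlog.mul hP).add hR
  refine H.congr_deriv ?_
  simp only [Pi.neg_apply, Pi.mul_apply, Pi.add_apply, Pi.sub_apply, Function.comp_apply]
  unfold F1f
  field_simp

theorem F1_hasDeriv (hz : ∀ k, n < k → a n k = 0) {r : ℝ} (hr : 0 < r) :
    HasDerivAt (F1f c1 γ a n) (Phi2f c1 γ a n r) r := by
  have hsq : HasDerivAt (fun s : ℝ => s ^ 2) (2 * r) r := by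
    simpa using hasDerivAt_pow 2 r
  have hP := (PXf_hasDerivAt γ hz (r ^ 2)).comp r hsq
  have hDP := (DPXf_hasDerivAt γ hz (r ^ 2)).comp r hsq
  have hDR := (DRXf_hasDerivAt γ hz (r ^ 2)).comp r hsq
  have hlog : HasDerivAt (fun s : ℝ => Real.log s + c1) r⁻¹ r :=
    (Real.hasDerivAt_log hr.ne').add_const c1
  have hid : HasDerivAt (fun s : ℝ => s) 1 r := hasDerivAt_id r
  have H := ((hP.div hid hr.ne').add
    (hlog.mul (((hid.const_mul 2).mul hDP)))).add
    (((hid.const_mul 2).mul hDR))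
  show HasDerivAt (fun s => PXf γ a n (s ^ 2) / s
    + (Real.log s + c1) * (2 * s * DPXf γ a n (s ^ 2))
    + 2 * s * DRXf γ a n (s ^ 2)) (Phi2f c1 γ a n r) r
  refine H.congr_deriv ?_
  simp only [Pi.neg_apply, Pi.mul_apply, Pi.add_apply, Pi.sub_apply, Function.comp_apply]
  unfold Phi2f
  field_simp
  ring

end Final

section Final2

variable {a : ℕ → ℕ → ℝ} {n : ℕ} (γ c1 : ℝ)

theorem PhiEq (hz : ∀ k, n < k → a n k = 0) (hγ : 0 < γ) {r : ℝ} (hr : 0 < r) :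
    PhiFund γ a n r = (Real.log r + (Real.log (γ / 2) + Real.eulerMascheroniConstant))
      * PXf γ a n (r ^ 2) + RXf γ a n (r ^ 2) := by
  unfold PhiFund
  rw [bK0 (γ * r), bK1 (γ * r), vPoly_eq hz r, wPoly_eq hz r]
  rw [show ((γ * r) / 2) ^ 2 = γ ^ 2 / 4 * r ^ 2 from by ring]
  rw [show Real.log ((γ * r) / 2) = Real.log r + Real.log (γ / 2) from by
    rw [show (γ * r) / 2 = (γ / 2) * r from by ring,
      Real.log_mul (by positivity) hr.ne']
    ring]
  unfold PXf RXf
  field_simp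
  ring

theorem ThetaF_diff (hz : ∀ k, n < k → a n k = 0) :
    DifferentiableAt ℝ (ThetaF c1 γ a n) 0 := by
  have d1 := QXf_diff γ hz 0
  have d2 := (DPXf_hasDerivAt γ hz 0).differentiableAt
  have d3 := DDPXf_diff γ hz 0
  have d4 := (DRXf_hasDerivAt γ hz 0).differentiableAt
  have d5 := DDRXf_diff γ hz 0
  have did : DifferentiableAt ℝ (fun x : ℝ => x) 0 := differentiableAt_id
  show DifferentiableAt ℝ (fun x => -QXf γ a n x + 4 * DPXf γ a n x
    + c1 * (2 * DPXf γ a n x + 4 * x * DDPXf γ a n x)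
    + 2 * DRXf γ a n x + 4 * x * DDRXf γ a n x) 0
  exact (((d1.neg.add (d2.const_mul 4)).add
    (((d2.const_mul 2).add ((did.const_mul 4).mul d3)).const_mul c1)).add
    (d4.const_mul 2)).add ((did.const_mul 4).mul d5)

theorem ThetaF_zero (hγ : γ ≠ 0) (ha0 : a n 0 = 1) :
    ThetaF (Real.log (γ / 2) + Real.eulerMascheroniConstant) γ a n 0
      = (Real.log (2 / γ) - Real.eulerMascheroniConstant)
          * (γ ^ 2 / 2 - γ * a n 1 + 2 * a n 2)
        - γ ^ 2 / 4 + γ * a n 1 - 3 * a n 2 + 2 * a n 3 / γ := by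
  have hlog : Real.log (γ / 2) = -Real.log (2 / γ) := by
    rw [Real.log_div hγ two_ne_zero, Real.log_div two_ne_zero hγ]
    ring
  unfold ThetaF QXf DPXf DDPXf DRXf DDRXf
  rw [hlog]
  simp [T_zero, polyN_zero, Dc, pv, pw, aA, aB, cC, cD, psiHarm_zero, psiHarm_one, ha0]
  field_simp
  ring

theorem derivderiv (hz : ∀ k, n < k → a n k = 0) (hγ : 0 < γ) {r : ℝ} (hr : 0 < r) :
    deriv (deriv (PhiFund γ a n)) r
      = Phi2f (Real.log (γ / 2) + Real.eulerMascheroniConstant) γ a n r := by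
  set c1' := Real.log (γ / 2) + Real.eulerMascheroniConstant with hc1
  have hPhiD : ∀ s : ℝ, 0 < s → HasDerivAt (PhiFund γ a n) (F1f c1' γ a n s) s := by
    intro s hs
    refine (G_hasDeriv γ c1' hz hs).congr_of_eventuallyEq ?_
    filter_upwards [isOpen_Ioi.mem_nhds (show s ∈ Set.Ioi 0 from hs)] with t ht
    exact PhiEq γ hz hγ ht
  have hev : deriv (PhiFund γ a n) =ᶠ[𝓝 r] F1f c1' γ a n := by
    filter_upwards [isOpen_Ioi.mem_nhds (show r ∈ Set.Ioi 0 from hr)] with t ht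
    exact (hPhiD t ht).deriv
  rw [hev.deriv_eq]
  exact (F1_hasDeriv γ c1' hz hr).deriv

end Final2


end Stmt17

/-- As `r → 0⁺`,
`Φ_n″(r) − 1/r² − ln(1/r)[I₀(γr) v̄_n(r) − (I₁(γr)/r) w̄_n(r)] − ω_n = O(r²)`, with
`ω_n = (ln(2/γ) − C)(γ²/2 − γ a_{n,1} + 2a_{n,2}) − γ²/4 + γ a_{n,1} − 3a_{n,2} + 2a_{n,3}/γ`:
there are `δ > 0` and `c₀ ≥ 0` bounding the left-hand side by `c₀ r²` for `0 < r < δ`. -/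
theorem stmt_17
    (κ c : ℝ) (hκ : 0 < κ) (hc : 0 < c) (a : ℕ → ℕ → ℝ)
    (ha0 : ∀ n : ℕ, a n 0 = 1)
    (hann : ∀ n : ℕ, 1 ≤ n →
      a n n = -(betaC κ c 1 * a (n - 1) (n - 1)) / (2 * gammaC κ c * n))
    (hrec : ∀ n k : ℕ, 1 ≤ k → k ≤ n - 1 →
      a n k = (1 / (2 * gammaC κ c * k)) *
        (4 * (((k + 1) / 2 : ℕ) : ℝ) ^ 2 * a n (k + 1) -
          ∑ m ∈ Finset.Icc (k - 1) (n - 1), betaC κ c (n - m) * a m (k - 1)))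
    (hzero : ∀ n k : ℕ, n < k → a n k = 0)
    (n : ℕ) :
    ∃ δ : ℝ, 0 < δ ∧ ∃ c₀ : ℝ, 0 ≤ c₀ ∧ ∀ r : ℝ, 0 < r → r < δ →
      |deriv (deriv (PhiFund (gammaC κ c) a n)) r - 1 / r ^ 2 -
          Real.log (1 / r) *
            (besselI0 (gammaC κ c * r) * vBar (gammaC κ c) a n r -
              besselI1 (gammaC κ c * r) / r * wBar (gammaC κ c) a n r) -
          ((Real.log (2 / gammaC κ c) - Real.eulerMascheroniConstant) *
              (gammaC κ c ^ 2 / 2 - gammaC κ c * a n 1 + 2 * a n 2) -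
            gammaC κ c ^ 2 / 4 + gammaC κ c * a n 1 - 3 * a n 2 +
            2 * a n 3 / gammaC κ c)| ≤ c₀ * r ^ 2 := by
  have hγ : 0 < gammaC κ c := div_pos hκ hc
  set γ := gammaC κ c with hγdef
  set c1 := Real.log (γ / 2) + Real.eulerMascheroniConstant with hc1
  have hzn : ∀ k, n < k → a n k = 0 := fun k hk => hzero n k hk
  have ha0n : a n 0 = 1 := ha0 n
  have hθ0 := Stmt17.ThetaF_zero (a := a) (n := n) γ hγ.ne' ha0n
  have hdiff := Stmt17.ThetaF_diff (a := a) (n := n) γ c1 hzn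
  have hO := hdiff.isBigO_sub
  obtain ⟨C, hC⟩ := hO.bound
  rw [Metric.eventually_nhds_iff] at hC
  obtain ⟨ε, hε, hCb⟩ := hC
  refine ⟨min (Real.sqrt ε) 1, by positivity, max C 0, le_max_right _ _, ?_⟩
  intro r hr hrδ
  have hx : (0 : ℝ) < r ^ 2 := by positivity
  have hkey : deriv (deriv (PhiFund γ a n)) r - 1 / r ^ 2
      - Real.log (1 / r) * (besselI0 (γ * r) * vBar γ a n r
        - besselI1 (γ * r) / r * wBar γ a n r)
      = Stmt17.ThetaF c1 γ a n (r ^ 2) := by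
    rw [Stmt17.derivderiv γ hzn hγ hr, Stmt17.bI0, Stmt17.bI1,
      Stmt17.vBar_eq γ hzn r, Stmt17.wBar_eq γ hzn r,
      show Real.log (1 / r) = -Real.log r from by rw [one_div, Real.log_inv]]
    rw [show (γ * r / 2) ^ 2 = γ ^ 2 / 4 * r ^ 2 from by ring]
    have hxy := Stmt17.XY (a := a) (n := n) γ hzn (x := r ^ 2) hx.ne'
    have hq := Stmt17.PXQ (a := a) (n := n) γ ha0n hzn (r ^ 2)
    have hPdiv : -(Stmt17.PXf γ a n (r ^ 2) / r ^ 2) - 1 / r ^ 2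
        = -Stmt17.QXf γ a n (r ^ 2) := by
      field_simp
      linear_combination (-1 : ℝ) * hq
    have hsub : γ * r / 2 * Stmt17.T Stmt17.aB (γ ^ 2 / 4 * r ^ 2) / r
          * Stmt17.polyN n (Stmt17.pwb γ a n) (r ^ 2)
        = γ / 2 * Stmt17.T Stmt17.aB (γ ^ 2 / 4 * r ^ 2)
          * Stmt17.polyN n (Stmt17.pwb γ a n) (r ^ 2) := by
      field_simp
    unfold Stmt17.Phi2f Stmt17.ThetaF
    rw [hsub]
    linear_combination hPdiv + Real.log r * hxy
  have hdist : dist (r ^ 2) 0 < ε := by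
    rw [Real.dist_eq, sub_zero, abs_of_nonneg hx.le]
    have h1 : r < Real.sqrt ε := lt_of_lt_of_le hrδ (min_le_left _ _)
    calc r ^ 2 < Real.sqrt ε ^ 2 := by nlinarith [Real.sqrt_nonneg ε]
      _ = ε := Real.sq_sqrt hε.le
  have hb := hCb hdist
  rw [Real.norm_eq_abs, Real.norm_eq_abs, sub_zero] at hb
  have habs : |r ^ 2| = r ^ 2 := abs_of_nonneg hx.le
  rw [habs] at hb
  calc |deriv (deriv (PhiFund γ a n)) r - 1 / r ^ 2
      - Real.log (1 / r) * (besselI0 (γ * r) * vBar γ a n r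
        - besselI1 (γ * r) / r * wBar γ a n r)
      - ((Real.log (2 / γ) - Real.eulerMascheroniConstant)
          * (γ ^ 2 / 2 - γ * a n 1 + 2 * a n 2)
        - γ ^ 2 / 4 + γ * a n 1 - 3 * a n 2 + 2 * a n 3 / γ)|
      = |Stmt17.ThetaF c1 γ a n (r ^ 2) - Stmt17.ThetaF c1 γ a n 0| := by
        rw [hkey, hθ0]
    _ ≤ C * r ^ 2 := hb
    _ ≤ max C 0 * r ^ 2 := mul_le_mul_of_nonneg_right (le_max_left _ _) hx.le
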